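/- Fix an integer q ≥ 2 and an alphabet Σ_q of size q. Let n ≥ 1, p ≥ 1, and set ℓ = ⌈log_q(n)⌉ + p + 1. If ℓ ≤ n, then a_q(n, ℓ, p) ≥ q^{n−1}; in particular, an ℓ-window p-least-period avoiding code of length n with a single redundancy symbol exists. -/

import Mathlib

/-- `p` is a period of the vector `s = (s_1, …, s_n)` (0-indexed here):
`s_i = s_{i+p}` for all valid indices. -/
def IsPeriod {α : Type*} {n : ℕ} (s : Fin n → α) (p : ℕ) : Prop :=
  ∀ i : ℕ, ∀ h : i + p < n,
    s ⟨i, lt_of_le_of_lt (Nat.le_add_right i p) h⟩ = s ⟨i + p, h⟩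

/-- The window of length `ℓ` of `s` starting at (0-indexed) position `i`. -/
def window {α : Type*} {n : ℕ} (s : Fin n → α) (i ℓ : ℕ) (h : i + ℓ ≤ n) :
    Fin ℓ → α :=
  fun j => s ⟨i + j, Nat.lt_of_lt_of_le (Nat.add_lt_add_left j.isLt i) h⟩

/-- `s` is an `ℓ`-window `p`-least-period avoiding vector: no window of
length `ℓ` has any period `p'` with `1 ≤ p' < p`. -/
def LPAvoiding {α : Type*} {n : ℕ} (ℓ p : ℕ) (s : Fin n → α) : Prop :=
  ∀ i : ℕ, ∀ h : i + ℓ ≤ n, ∀ p', 1 ≤ p' → p' < p →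
    ¬ IsPeriod (window s i ℓ h) p'

/-- `s` is an `ℓ`-window `p`-period avoiding vector: no window of
length `ℓ` has period `p`. -/
def PAvoiding {α : Type*} {n : ℕ} (ℓ p : ℕ) (s : Fin n → α) : Prop :=
  ∀ i : ℕ, ∀ h : i + ℓ ≤ n, ¬ IsPeriod (window s i ℓ h) p

/-- `s` satisfies the `k`-RLL constraint w.r.t. the zero symbol `z`:
no window of length `k` consists entirely of `z`. -/
def RLLok {α : Type*} {n : ℕ} (z : α) (k : ℕ) (s : Fin n → α) : Prop :=
  ∀ i : ℕ, ∀ h : i + k ≤ n, ∃ j : Fin k, window s i k h j ≠ z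

/-- For `ℓ = ⌈log_q(n)⌉ + p + 1` with `ℓ ≤ n`, `a_q(n, ℓ, p) ≥ q^{n−1}`;
in particular, an `(ℓ,p)`-LPA code of length `n` with a single redundancy
symbol exists. -/
lemma aux_geom_sum_le {q : ℕ} (hq : 2 ≤ q) (p : ℕ) :
    ∑ p' ∈ Finset.Ico 1 p, q ^ p' ≤ q ^ p := by
  induction p with
  | zero => simp
  | succ p ih =>
    rcases Nat.eq_zero_or_pos p with rfl | hp0
    · simp
    · calc ∑ p' ∈ Finset.Ico 1 (p+1), q ^ p'
          = (∑ p' ∈ Finset.Ico 1 p, q ^ p') + q ^ p :=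
            Finset.sum_Ico_succ_top hp0 _
        _ ≤ q ^ (p+1) := by
            have h2 : q ^ p * 2 ≤ q ^ p * q := Nat.mul_le_mul_left _ hq
            have h3 : q ^ (p+1) = q ^ p * q := pow_succ q p
            omega

theorem aq_single_redundancy_exists
    {q : ℕ} (hq : 2 ≤ q) (Sigma : Type*) [Fintype Sigma]
    (hcard : Fintype.card Sigma = q)
    (n p ℓ : ℕ) (hn : 1 ≤ n) (hp : 1 ≤ p)
    (hℓ : ℓ = ⌈Real.logb q n⌉₊ + p + 1) (hℓn : ℓ ≤ n) :
    Nat.card {s : Fin n → Sigma // LPAvoiding ℓ p s} ≥ q ^ (n - 1) := by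
  classical
  set L : ℕ := ⌈Real.logb (q : ℝ) (n : ℝ)⌉₊ with hLdef
  -- n ≤ q ^ L
  have hnL : n ≤ q ^ L := by
    have h1 : (1:ℝ) < q := by exact_mod_cast hq
    have h0 : (0:ℝ) < n := by exact_mod_cast hn
    have key : (n:ℝ) ≤ (q:ℝ) ^ ((L : ℕ) : ℝ) := by
      calc (n:ℝ) = (q:ℝ) ^ (Real.logb q n) :=
            (Real.rpow_logb (by positivity) (ne_of_gt h1) h0).symm
        _ ≤ _ := Real.rpow_le_rpow_of_exponent_le h1.le (Nat.le_ceil _)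
    rw [Real.rpow_natCast] at key
    exact_mod_cast key
  have hSnonempty : Nonempty Sigma := by
    rw [← Fintype.card_pos_iff, hcard]; omega
  obtain ⟨z⟩ := hSnonempty
  -- the Bad sets
  let Bad : ℕ → ℕ → Finset (Fin n → Sigma) := fun i p' =>
    Finset.univ.filter (fun s => ∀ j : Fin n, i + p' ≤ j.val → j.val < i + ℓ →
      s j = s ⟨j.val - p', lt_of_le_of_lt (Nat.sub_le _ _) j.isLt⟩)
  -- card bound for each Bad set
  have hBadcard : ∀ i p', i + ℓ ≤ n → 1 ≤ p' → p' < p →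
      (Bad i p').card ≤ q ^ (n - ℓ + p') := by
    intro i p' hin hp1 hp2
    have hp'ℓ : p' < ℓ := by omega
    set T : Finset (Fin n) :=
      (Finset.Ico (i + p') (i + ℓ)).attachFin
        (fun m hm => lt_of_lt_of_le (Finset.mem_Ico.mp hm).2 hin) with hTdef
    have hTmem : ∀ j : Fin n, j ∈ T ↔ i + p' ≤ j.val ∧ j.val < i + ℓ := by
      intro j
      rw [hTdef, Finset.mem_attachFin, Finset.mem_Ico]
    have hTcard : T.card = ℓ - p' := by
      rw [hTdef, Finset.card_attachFin, Nat.card_Ico]; omega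
    set C : Finset (Fin n → Sigma) :=
      Fintype.piFinset (fun j : Fin n => if j ∈ T then ({z} : Finset Sigma)
        else Finset.univ) with hCdef
    have hCcard : C.card = q ^ (n - ℓ + p') := by
      rw [hCdef, Fintype.card_piFinset]
      have h : ∀ j : Fin n,
          (if j ∈ T then ({z} : Finset Sigma) else Finset.univ).card
            = if j ∈ T then 1 else q := by
        intro j; split <;> simp [hcard]
      rw [Finset.prod_congr rfl (fun j _ => h j), Finset.prod_ite]
      have h1 : Finset.univ.filter (fun j : Fin n => ¬ j ∈ T) = Tᶜ := by
        ext j; simp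
      rw [h1]
      simp only [Finset.prod_const_one, Finset.prod_const, one_mul,
        Finset.card_compl, Fintype.card_fin]
      congr 1
      omega
    rw [← hCcard]
    apply Finset.card_le_card_of_injOn (fun s => fun j => if j ∈ T then z else s j)
    · intro s _
      rw [hCdef, Finset.mem_coe, Fintype.mem_piFinset]
      intro j
      by_cases hj : j ∈ T <;> simp [hj]
    · intro s hs t ht hst
      simp only [Finset.coe_filter, Set.mem_setOf_eq, Bad] at hs ht
      have key : ∀ m : ℕ, ∀ j : Fin n, j.val = m → s j = t j := by
        intro m
        induction m using Nat.strong_induction_on with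
        | _ m ih =>
          intro j hj
          by_cases hcase : i + p' ≤ j.val ∧ j.val < i + ℓ
          · have hs' := hs.2 j hcase.1 hcase.2
            have ht' := ht.2 j hcase.1 hcase.2
            rw [hs', ht']
            exact ih (j.val - p') (by omega) _ rfl
          · have := congrFun hst j
            have hjT : j ∉ T := by rw [hTmem]; exact hcase
            simpa [hjT] using this
      funext j
      exact key j.val j rfl
  -- the bad set and its covering
  set B : Finset (Fin n → Sigma) :=
    Finset.univ.filter (fun s => ¬ LPAvoiding ℓ p s) with hBdef
  have hcover : B ⊆ ((Finset.range (n - ℓ + 1)) ×ˢ (Finset.Ico 1 p)).biUnion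
      (fun ip => Bad ip.1 ip.2) := by
    intro s hs
    rw [hBdef, Finset.mem_filter] at hs
    have hs' := hs.2
    unfold LPAvoiding at hs'
    push_neg at hs'
    obtain ⟨i, h, p', hp1, hp2, hper⟩ := hs'
    rw [Finset.mem_biUnion]
    refine ⟨(i, p'), ?_, ?_⟩
    · rw [Finset.mem_product, Finset.mem_range, Finset.mem_Ico]
      exact ⟨by omega, hp1, hp2⟩
    · simp only [Bad, Finset.mem_filter, Finset.mem_univ, true_and]
      intro j hj1 hj2
      have ha : (j.val - i - p') + p' < ℓ := by omega
      have hthis := hper (j.val - i - p') ha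
      unfold window at hthis
      have goal := hthis.symm
      convert goal using 2 <;> (apply Fin.ext; simp; omega)
  -- bound on B.card
  have hgeom := aux_geom_sum_le hq p
  have hBcard : B.card ≤ q ^ (n - 1) := by
    calc B.card ≤ ∑ ip ∈ (Finset.range (n - ℓ + 1)) ×ˢ (Finset.Ico 1 p),
          (Bad ip.1 ip.2).card :=
        le_trans (Finset.card_le_card hcover) (Finset.card_biUnion_le)
      _ ≤ ∑ ip ∈ (Finset.range (n - ℓ + 1)) ×ˢ (Finset.Ico 1 p),
          q ^ (n - ℓ + ip.2) := by
          apply Finset.sum_le_sum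
          intro ip hip
          rw [Finset.mem_product, Finset.mem_range, Finset.mem_Ico] at hip
          exact hBadcard ip.1 ip.2 (by omega) hip.2.1 hip.2.2
      _ = ∑ _i ∈ Finset.range (n - ℓ + 1), ∑ p' ∈ Finset.Ico 1 p,
          q ^ (n - ℓ + p') := by rw [Finset.sum_product]
      _ = (n - ℓ + 1) * ∑ p' ∈ Finset.Ico 1 p, q ^ (n - ℓ + p') := by
          rw [Finset.sum_const, Finset.card_range, smul_eq_mul]
      _ ≤ n * (q ^ (n - ℓ) * q ^ p) := by
          have hsum : ∑ p' ∈ Finset.Ico 1 p, q ^ (n - ℓ + p')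
              = q ^ (n - ℓ) * ∑ p' ∈ Finset.Ico 1 p, q ^ p' := by
            rw [Finset.mul_sum]
            exact Finset.sum_congr rfl (fun p' _ => pow_add q _ _)
          exact Nat.mul_le_mul (by omega)
            (by rw [hsum]; exact Nat.mul_le_mul_left _ hgeom)
      _ ≤ q ^ L * (q ^ (n - ℓ) * q ^ p) := Nat.mul_le_mul_right _ hnL
      _ = q ^ (n - 1) := by
          rw [← pow_add, ← pow_add]
          congr 1
          omega
  -- conclude
  have hGB : (Finset.univ.filter (fun s : Fin n → Sigma => LPAvoiding ℓ p s)).card + B.card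
      = q ^ n := by
    rw [hBdef, Finset.card_filter_add_card_filter_not]
    simp [Finset.card_univ, hcard]
  have hNat : Nat.card {s : Fin n → Sigma // LPAvoiding ℓ p s}
      = (Finset.univ.filter (fun s : Fin n → Sigma => LPAvoiding ℓ p s)).card := by
    rw [Nat.card_eq_fintype_card, Fintype.card_subtype]
  have hqn : q ^ n = q ^ (n-1) * q := by
    rw [← pow_succ]; congr 1; omega
  have h2 : q ^ (n-1) * 2 ≤ q ^ (n-1) * q := Nat.mul_le_mul_left _ hq
  omega
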